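/- Let w ∈ S_n with ℓ(w) > 0, let i be the maximal index with w_i > w_{i+1}, and let j be the minimal index with w_i < w_j (or n+1 if none exists). Then v = s_{j-2}···s_{i+1}s_i w satisfies ℓ(v) = ℓ(w) − (j − i − 1). -/

import Mathlib

/-- The simple transposition `s i` of `i` and `i+1` (0-indexed) in `S_n`,
the identity if out of range. -/
def st (n : ℕ) (i : ℕ) : Equiv.Perm (Fin n) :=
  if h : i + 1 < n then Equiv.swap ⟨i, Nat.lt_of_succ_lt h⟩ ⟨i + 1, h⟩ else 1

/-- The Coxeter length of `w`: the number of inversion pairs. -/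
def invCount {n : ℕ} (w : Equiv.Perm (Fin n)) : ℕ :=
  (Finset.univ.filter fun p : Fin n × Fin n => p.1 < p.2 ∧ w p.2 < w p.1).card

lemma swap_lt_swap {n : ℕ} (a b : Fin n) (hab : (a : ℕ) + 1 = b) (p q : Fin n)
    (hpq : p < q) (hne : ¬(p = a ∧ q = b)) :
    Equiv.swap a b p < Equiv.swap a b q := by
  rw [Equiv.swap_apply_def, Equiv.swap_apply_def]
  rw [Fin.lt_def] at hpq
  simp only [Fin.ext_iff] at hne
  split_ifs <;>
    simp only [Fin.lt_def, Fin.ext_iff] at * <;> omega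

/-- Multiplying on the right by a simple transposition at a descent
reduces the inversion count by exactly one. -/
lemma invCount_mul_st {n : ℕ} (u : Equiv.Perm (Fin n)) (k : ℕ) (hk : k + 1 < n)
    (hd : u ⟨k + 1, hk⟩ < u ⟨k, Nat.lt_of_succ_lt hk⟩) :
    invCount (u * st n k) + 1 = invCount u := by
  set a : Fin n := ⟨k, Nat.lt_of_succ_lt hk⟩ with ha
  set b : Fin n := ⟨k + 1, hk⟩ with hb
  have hst : st n k = Equiv.swap a b := by rw [st, dif_pos hk]
  have hab : (a : ℕ) + 1 = b := rfl
  have habf : a < b := by simp [Fin.lt_def, ha, hb]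
  set s := Equiv.swap a b with hs
  set A := Finset.univ.filter
    (fun p : Fin n × Fin n => p.1 < p.2 ∧ (u * s) p.2 < (u * s) p.1) with hA
  set B := Finset.univ.filter
    (fun p : Fin n × Fin n => p.1 < p.2 ∧ u p.2 < u p.1) with hB
  have hmemB : (a, b) ∈ B := by
    simp only [hB, Finset.mem_filter, Finset.mem_univ, true_and]
    exact ⟨habf, hd⟩
  have key : ∀ p : Fin n × Fin n, p ∈ A → ¬(p.1 = a ∧ p.2 = b) := by
    rintro ⟨p1, p2⟩ hp ⟨h1, h2⟩
    subst h1; subst h2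
    rw [hA, Finset.mem_filter] at hp
    simp only [Finset.mem_univ, true_and,
      Equiv.Perm.mul_apply] at hp
    rw [hs, Equiv.swap_apply_left, Equiv.swap_apply_right] at hp
    exact absurd hp.2 (not_lt.2 (le_of_lt hd))
  have hcard : A.card = (B.erase (a, b)).card := by
    apply Finset.card_nbij' (fun p => (s p.1, s p.2)) (fun p => (s p.1, s p.2))
    · intro p hp
      have hne := key p hp
      rw [Finset.mem_coe, hA, Finset.mem_filter] at hp
      simp only [Finset.mem_univ, true_and,
        Equiv.Perm.mul_apply] at hp
      have hlt : s p.1 < s p.2 := swap_lt_swap a b hab p.1 p.2 hp.1 hne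
      refine Finset.mem_erase.2 ⟨?_, ?_⟩
      · intro hcontra
        rw [Prod.ext_iff] at hcontra
        have h1 : s p.1 = a := hcontra.1
        have h2 : s p.2 = b := hcontra.2
        have : p.1 = b := by
          have := congrArg s h1
          rwa [hs, Equiv.swap_apply_self, Equiv.swap_apply_left] at this
        have : p.2 = a := by
          have := congrArg s h2
          rwa [hs, Equiv.swap_apply_self, Equiv.swap_apply_right] at this
        have : p.2 < p.1 := by
          rw [‹p.2 = a›, ‹p.1 = b›]; exact habf
        exact absurd hp.1 (not_lt.2 (le_of_lt this))
      · simp only [hB, Finset.mem_filter, Finset.mem_univ, true_and]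
        exact ⟨hlt, hp.2⟩
    · intro p hp
      rw [Finset.mem_coe, Finset.mem_erase] at hp
      obtain ⟨hne, hp⟩ := hp
      simp only [hB, Finset.mem_filter, Finset.mem_univ, true_and] at hp
      have hne' : ¬(p.1 = a ∧ p.2 = b) := by
        intro ⟨h1, h2⟩; exact hne (Prod.ext h1 h2)
      have hlt : s p.1 < s p.2 := swap_lt_swap a b hab p.1 p.2 hp.1 hne'
      rw [Finset.mem_coe, hA, Finset.mem_filter]
      simp only [Finset.mem_univ, true_and,
        Equiv.Perm.mul_apply]
      refine ⟨hlt, ?_⟩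
      rw [hs, Equiv.swap_apply_self, Equiv.swap_apply_self]
      exact hp.2
    · intro p _; simp [hs, Equiv.swap_apply_self]
    · intro p _; simp [hs, Equiv.swap_apply_self]
  have : invCount (u * st n k) = A.card := by rw [hst, invCount]
  rw [this, hcard, Finset.card_erase_of_mem hmemB]
  have hBpos : 0 < B.card := Finset.card_pos.2 ⟨(a, b), hmemB⟩
  have : invCount u = B.card := rfl
  omega

/-- The partial products fix everything above `i + t`. -/
lemma prod_st_fix (n i : ℕ) : ∀ t, ∀ x : Fin n, i + t < (x : ℕ) →
    (((List.range' i t).map (st n)).prod) x = x := by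
  intro t
  induction t with
  | zero => intro x _; simp
  | succ t ih =>
    intro x hx
    rw [List.range'_1_concat, List.map_append, List.prod_append]
    simp only [List.map_cons, List.map_nil, List.prod_cons, List.prod_nil, mul_one,
      Equiv.Perm.mul_apply]
    have hfix : st n (i + t) x = x := by
      rw [st]
      split_ifs with h
      · apply Equiv.swap_apply_of_ne_of_ne <;>
          · intro hc; rw [Fin.ext_iff] at hc; simp at hc; omega
      · rfl
    rw [hfix]
    exact ih x (by omega)

/-- The partial product sends position `i + t` to position `i`. -/
lemma prod_st_top (n i : ℕ) : ∀ t, ∀ h : i + t < n,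
    (((List.range' i t).map (st n)).prod) ⟨i + t, h⟩ = ⟨i, by omega⟩ := by
  intro t
  induction t with
  | zero => intro h; simp
  | succ t ih =>
    intro h
    rw [List.range'_1_concat, List.map_append, List.prod_append]
    simp only [List.map_cons, List.map_nil, List.prod_cons, List.prod_nil, mul_one,
      Equiv.Perm.mul_apply]
    have h1 : st n (i + t) ⟨i + t + 1, by omega⟩ = ⟨i + t, by omega⟩ := by
      rw [st, dif_pos (by omega : i + t + 1 < n)]
      exact Equiv.swap_apply_right _ _
    have hx : (⟨i + (t + 1), h⟩ : Fin n) = ⟨i + t + 1, by omega⟩ := by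
      simp [Fin.ext_iff]; omega
    rw [hx, h1]
    exact ih (by omega)

/-- (0-indexed version.)  Let `i` be the maximal position with `w i > w (i+1)` and let
`j` be the minimal position with `i < j` and `w i < w j` (and `j = n` if none exists).
Then `v = s_{j-2} ⋯ s_{i+1} s_i w` (the `s_k` successively swapping the entries in
positions `k, k+1` of the one-line notation, i.e. `v = w * s_i * s_{i+1} * ⋯ * s_{j-2}`
as functions) satisfies `ℓ(v) = ℓ(w) - (j - i - 1)`. -/
theorem length_after_removing_last_descent (n : ℕ) (w : Equiv.Perm (Fin n)) (i j : ℕ)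
    (hi : i + 1 < n)
    (hpos : 0 < invCount w)
    (hdesc : w ⟨i + 1, hi⟩ < w ⟨i, Nat.lt_of_succ_lt hi⟩)
    (hmax : ∀ k, ∀ hk : k + 1 < n, w ⟨k + 1, hk⟩ < w ⟨k, Nat.lt_of_succ_lt hk⟩ → k ≤ i)
    (hij : i < j) (hjn : j ≤ n)
    (hjval : ∀ h : j < n, w ⟨i, Nat.lt_of_succ_lt hi⟩ < w ⟨j, h⟩)
    (hjmin : ∀ k, ∀ hk : k < n, i < k → w ⟨i, Nat.lt_of_succ_lt hi⟩ < w ⟨k, hk⟩ → j ≤ k) :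
    invCount (w * ((List.range' i (j - 1 - i)).map (st n)).prod) + (j - i - 1)
      = invCount w := by
  have main : ∀ t, t ≤ j - 1 - i →
      invCount (w * ((List.range' i t).map (st n)).prod) + t = invCount w := by
    intro t
    induction t with
    | zero => intro _; simp
    | succ t ih =>
      intro ht
      have ht' : t ≤ j - 1 - i := by omega
      have hitn : i + t + 1 < n := by omega
      have hitn' : i + t + 1 < j := by omega
      rw [List.range'_1_concat, List.map_append, List.prod_append]
      simp only [List.map_cons, List.map_nil, List.prod_cons, List.prod_nil, mul_one,
        ← mul_assoc]
      set u := w * ((List.range' i t).map (st n)).prod with hu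
      have hu1 : u ⟨i + t + 1, hitn⟩ = w ⟨i + t + 1, hitn⟩ := by
        rw [hu, Equiv.Perm.mul_apply, prod_st_fix n i t _ (by simp)]
      have hu2 : u ⟨i + t, Nat.lt_of_succ_lt hitn⟩ = w ⟨i, Nat.lt_of_succ_lt hi⟩ := by
        rw [hu, Equiv.Perm.mul_apply, prod_st_top n i t (by omega)]
      have hwlt : w ⟨i + t + 1, hitn⟩ < w ⟨i, Nat.lt_of_succ_lt hi⟩ := by
        rcases lt_trichotomy (w ⟨i + t + 1, hitn⟩) (w ⟨i, Nat.lt_of_succ_lt hi⟩) with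
          h | h | h
        · exact h
        · exfalso
          have := w.injective h
          rw [Fin.ext_iff] at this
          simp at this; omega
        · exfalso
          have := hjmin (i + t + 1) hitn (by omega) h
          omega
      have hd : u ⟨i + t + 1, hitn⟩ < u ⟨i + t, Nat.lt_of_succ_lt hitn⟩ := by
        rw [hu1, hu2]; exact hwlt
      have := invCount_mul_st u (i + t) hitn hd
      have hIH := ih ht'
      omega
  have heq : j - i - 1 = j - 1 - i := by omega
  rw [heq]
  exact main _ le_rfl
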